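/- Let X = X_1 × ⋯ × X_n be a direct product of finitely many nonabelian finite simple groups, and let Y be a subgroup of X such that for each i the projection of Y onto X_i is either all of X_i or trivial. Then Y is isomorphic to a direct product of finitely many nonabelian finite simple groups. -/

import Mathlib

/-- Multiplicative version of `Equiv.piFinSucc` for dependent families. -/
private def piFinSuccME {m : ℕ} (Z : Fin (m + 1) → Type) [∀ j, Group (Z j)] :
    ((j : Fin (m + 1)) → Z j) ≃* Z 0 × ((i : Fin m) → Z i.succ) where
  toFun f := (f 0, fun i => f i.succ)
  invFun x := Fin.cases x.1 x.2
  left_inv f := by funext j; induction j using Fin.cases <;> simp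
  right_inv x := by ext <;> simp
  map_mul' f g := by simp [Prod.ext_iff]; rfl

/-- If `W ≤ A × B` with `A` simple and full first projection, then `W` is isomorphic
either to its image in `B` or to `A ×` its image in `B`. -/
private lemma key {A B : Type} [Group A] [Group B] [IsSimpleGroup A]
    (W : Subgroup (A × B)) (htop : Subgroup.map (MonoidHom.fst A B) W = ⊤) :
    Nonempty (W ≃* Subgroup.map (MonoidHom.snd A B) W) ∨
    Nonempty (W ≃* A × Subgroup.map (MonoidHom.snd A B) W) := by
  set N : Subgroup (A × B) := W ⊓ (MonoidHom.snd A B).ker with hN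
  have hNmem : ∀ w : A × B, w ∈ N ↔ w ∈ W ∧ w.2 = 1 := by
    intro w; rw [hN, Subgroup.mem_inf, MonoidHom.mem_ker]; exact Iff.rfl
  set M : Subgroup A := N.map (MonoidHom.fst A B) with hM
  have hMnormal : M.Normal := by
    constructor
    intro a ha g
    obtain ⟨w, hw, rfl⟩ := ha
    obtain ⟨hwW, hw2⟩ := (hNmem w).mp hw
    have hg : g ∈ Subgroup.map (MonoidHom.fst A B) W := htop ▸ Subgroup.mem_top g
    obtain ⟨u, hu, rfl⟩ := hg
    refine ⟨u * w * u⁻¹, (hNmem _).mpr ⟨mul_mem (mul_mem hu hwW) (inv_mem hu), ?_⟩, rfl⟩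
    simp [hw2]
  rcases hMnormal.eq_bot_or_eq_top with hMbot | hMtop
  · -- projection to B is injective on W
    left
    set f : W →* B := (MonoidHom.snd A B).comp W.subtype with hf
    have hinj : Function.Injective f := by
      rw [injective_iff_map_eq_one]
      intro w hw1
      have hwN : (w : A × B) ∈ N := (hNmem _).mpr ⟨w.2, hw1⟩
      have h1 : (w : A × B).1 ∈ M := ⟨w, hwN, rfl⟩
      rw [hMbot, Subgroup.mem_bot] at h1
      exact Subtype.ext (Prod.ext h1 hw1)
    have hr : f.range = Subgroup.map (MonoidHom.snd A B) W := by
      rw [hf, MonoidHom.range_comp, Subgroup.range_subtype]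
    exact ⟨(MonoidHom.ofInjective hinj).trans (MulEquiv.subgroupCongr hr)⟩
  · -- A × 1 ≤ W
    right
    have hA1 : ∀ a : A, ((a, 1) : A × B) ∈ W := by
      intro a
      have : a ∈ M := hMtop ▸ Subgroup.mem_top a
      obtain ⟨w, hw, rfl⟩ := this
      obtain ⟨hwW, hw2⟩ := (hNmem w).mp hw
      have hw' : ((w.1, 1) : A × B) ∈ W := by
        have : w = (w.1, 1) := by ext <;> simp [hw2]
        rwa [← this]
      exact hw'
    set P := Subgroup.map (MonoidHom.snd A B) W with hP
    set φ : W →* A × P :=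
      MonoidHom.prod ((MonoidHom.fst A B).comp W.subtype)
        (((MonoidHom.snd A B).comp W.subtype).codRestrict P
          (fun w => ⟨(w : A × B), w.2, rfl⟩)) with hφ
    have hbij : Function.Bijective φ := by
      constructor
      · rw [injective_iff_map_eq_one]
        intro w hw1
        have h1 : (w : A × B).1 = 1 := congrArg Prod.fst hw1
        have h2p : (φ w).2 = 1 := congrArg Prod.snd hw1
        have h2 : (w : A × B).2 = 1 := congrArg Subtype.val h2p
        exact Subtype.ext (Prod.ext h1 h2)
      · rintro ⟨a, p, hp⟩
        obtain ⟨w, hwW, hw2⟩ := hp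
        refine ⟨⟨(a * w.1⁻¹, 1) * w, mul_mem (hA1 _) hwW⟩, ?_⟩
        refine Prod.ext ?_ (Subtype.ext ?_)
        · simp [hφ]
        · show (((a * w.1⁻¹, 1) : A × B) * w).2 = p
          simpa [hφ] using hw2
    exact ⟨MulEquiv.ofBijective φ hbij⟩

private lemma aux (n : ℕ) : ∀ (X : Fin n → Type) (_ : ∀ i, Group (X i))
    (_ : ∀ i, Finite (X i)) (_ : ∀ i, IsSimpleGroup (X i))
    (_ : ∀ i, ∃ a b : X i, a * b ≠ b * a) (Y : Subgroup (∀ i, X i)),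
    (∀ i, Subgroup.map (Pi.evalMonoidHom X i) Y = ⊤ ∨
      Subgroup.map (Pi.evalMonoidHom X i) Y = ⊥) →
    ∃ (m : ℕ) (Z : Fin m → Type) (_ : ∀ j, Group (Z j)),
      (∀ j, Finite (Z j)) ∧ (∀ j, IsSimpleGroup (Z j)) ∧
      (∀ j, ∃ a b : Z j, a * b ≠ b * a) ∧
      Nonempty (Y ≃* ((j : Fin m) → Z j)) := by
  induction n with
  | zero =>
    intro X gX fX hs hn Y hp
    letI := gX
    letI instE : ∀ j : Fin 0, Group (Fin.elim0 j) := fun j => j.elim0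
    refine ⟨0, Fin.elim0, instE, fun j => j.elim0, fun j => j.elim0,
      fun j => j.elim0, ?_⟩
    haveI : Unique (∀ i : Fin 0, X i) := ⟨⟨fun i => i.elim0⟩, fun f => funext fun i => i.elim0⟩
    haveI : Unique Y := ⟨⟨1⟩, fun y => Subtype.ext (Subsingleton.elim _ _)⟩
    haveI : Unique ((j : Fin 0) → Fin.elim0 j) :=
      ⟨⟨fun j => j.elim0⟩, fun f => funext fun j => j.elim0⟩
    exact ⟨MulEquiv.ofUnique⟩
  | succ n ih =>
    intro X gX fX hs hn Y hp
    letI := gX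
    haveI := fX
    haveI := hs
    set B : Fin n → Type := fun i => X i.succ with hB
    letI : ∀ i, Group (B i) := fun i => gX i.succ
    set e : ((j : Fin (n + 1)) → X j) ≃* X 0 × ((i : Fin n) → B i) := piFinSuccME X with he
    set W : Subgroup (X 0 × ((i : Fin n) → B i)) := Y.map e.toMonoidHom with hW
    have eYW : Nonempty (Y ≃* W) := ⟨e.subgroupMap Y⟩
    set P : Subgroup ((i : Fin n) → B i) :=
      Subgroup.map (MonoidHom.snd (X 0) _) W with hP
    -- projections of P equal projections of Y on successor coordinates
    have hPproj : ∀ i : Fin n, Subgroup.map (Pi.evalMonoidHom B i) P =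
        Subgroup.map (Pi.evalMonoidHom X i.succ) Y := by
      intro i
      rw [hP, hW, Subgroup.map_map, Subgroup.map_map]
      congr 1
    have hPhyp : ∀ i, Subgroup.map (Pi.evalMonoidHom B i) P = ⊤ ∨
        Subgroup.map (Pi.evalMonoidHom B i) P = ⊥ := by
      intro i; rw [hPproj i]; exact hp i.succ
    obtain ⟨m, Z, instZ, finZ, simpZ, nonabZ, ⟨eP⟩⟩ :=
      ih B (fun i => gX i.succ) (fun i => fX i.succ) (fun i => hs i.succ)
        (fun i => hn i.succ) P hPhyp
    -- first projection of W
    have hfstW : Subgroup.map (MonoidHom.fst (X 0) _) W =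
        Subgroup.map (Pi.evalMonoidHom X 0) Y := by
      rw [hW, Subgroup.map_map]; congr 1
    -- Case analysis
    have hWsnd : Nonempty (W ≃* P) ∨ Nonempty (W ≃* X 0 × P) := by
      rcases hp 0 with htop | hbot
      · have : Subgroup.map (MonoidHom.fst (X 0) _) W = ⊤ := by rw [hfstW]; exact htop
        exact key W this
      · -- first projection trivial ⇒ snd injective on W
        left
        have hfst1 : ∀ w : X 0 × ((i : Fin n) → B i), w ∈ W → w.1 = 1 := by
          intro w hw
          have : w.1 ∈ Subgroup.map (MonoidHom.fst (X 0) _) W := ⟨w, hw, rfl⟩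
          rw [hfstW, hbot] at this
          exact this
        set f : W →* ((i : Fin n) → B i) := (MonoidHom.snd _ _).comp W.subtype with hf
        have hinj : Function.Injective f := by
          rw [injective_iff_map_eq_one]
          intro w hw1
          exact Subtype.ext (Prod.ext (hfst1 _ w.2) hw1)
        have hr : f.range = P := by
          rw [hf, MonoidHom.range_comp, Subgroup.range_subtype, hP]
        exact ⟨(MonoidHom.ofInjective hinj).trans (MulEquiv.subgroupCongr hr)⟩
    obtain ⟨eY⟩ := eYW
    rcases hWsnd with hE | hE
    · obtain ⟨eW⟩ := hE
      exact ⟨m, Z, instZ, finZ, simpZ, nonabZ, ⟨eY.trans (eW.trans eP)⟩⟩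
    · obtain ⟨eW⟩ := hE
      letI := instZ
      set Z' : Fin (m + 1) → Type := fun j => Fin.cases (X 0) Z j with hZ'
      letI instZ' : ∀ j, Group (Z' j) := fun j =>
        Fin.cases (motive := fun j => Group (Z' j)) (gX 0) (fun i => instZ i) j
      have finZ' : ∀ j, Finite (Z' j) := fun j =>
        Fin.cases (motive := fun j => Finite (Z' j)) (fX 0) (fun i => finZ i) j
      have simpZ' : ∀ j, IsSimpleGroup (Z' j) := fun j =>
        Fin.cases (motive := fun j => IsSimpleGroup (Z' j)) (hs 0) (fun i => simpZ i) j
      have nonabZ' : ∀ j, ∃ a b : Z' j, a * b ≠ b * a := fun j =>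
        Fin.cases (motive := fun j => ∃ a b : Z' j, a * b ≠ b * a) (hn 0)
          (fun i => nonabZ i) j
      refine ⟨m + 1, Z', instZ', finZ', simpZ', nonabZ', ?_⟩
    -- Y ≃* W ≃* X 0 × P ≃* X 0 × Π Z ≃* Π Z'
      have e2 : (X 0 × P) ≃* (X 0 × ((j : Fin m) → Z j)) :=
        MulEquiv.prodCongr (MulEquiv.refl _) eP
      have e3 : ((j : Fin (m + 1)) → Z' j) ≃* X 0 × ((j : Fin m) → Z j) := piFinSuccME Z'
      exact ⟨eY.trans ((eW.trans e2).trans e3.symm)⟩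

theorem stmt_10 (n : ℕ) (X : Fin n → Type) [∀ i, Group (X i)] [∀ i, Finite (X i)]
    (hsimple : ∀ i, IsSimpleGroup (X i))
    (hnonab : ∀ i, ∃ a b : X i, a * b ≠ b * a)
    (Y : Subgroup (∀ i, X i))
    (hproj : ∀ i, Subgroup.map (Pi.evalMonoidHom X i) Y = ⊤ ∨
      Subgroup.map (Pi.evalMonoidHom X i) Y = ⊥) :
    ∃ (m : ℕ) (Z : Fin m → Type) (_ : ∀ j, Group (Z j)),
      (∀ j, Finite (Z j)) ∧ (∀ j, IsSimpleGroup (Z j)) ∧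
      (∀ j, ∃ a b : Z j, a * b ≠ b * a) ∧
      Nonempty (Y ≃* ((j : Fin m) → Z j)) := by
  exact aux n X inferInstance inferInstance hsimple hnonab Y hproj
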